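/- Let s ≥ 3, w_0 > 1, and define R_s(x) = 1 + b_{s−1} x + γ_s(T_s(w_0 + w_1 x) − T_s(w_0)) + δ_s(T_{s−2}(w_0 + w_1 x) − T_{s−2}(w_0)) with b_{s−1} = 1/(1 + T_{s−1}(w_0)), w_1 = (1 + T_{s−1}(w_0))/T_{s−1}′(w_0), γ_s = b_{s−1}/(2 s w_1), δ_s = −b_{s−1}/(2(s−2) w_1). Then R_s(0) = 1, R_s′(0) = 1, and R_s′′(0) = 1. -/

import Mathlib

open Real

/-- Chebyshev polynomial of the first kind, as a real function. -/
noncomputable def chebT : ℕ → ℝ → ℝ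
  | 0, _ => 1
  | 1, x => x
  | (n+2), x => 2 * x * chebT (n+1) x - chebT n x


noncomputable def chebU : ℕ → ℝ → ℝ
  | 0, _ => 1
  | 1, x => 2 * x
  | (n+2), x => 2 * x * chebU (n+1) x - chebU n x

lemma chebT_add_two (n : ℕ) (x : ℝ) :
    chebT (n+2) x = 2 * x * chebT (n+1) x - chebT n x := rfl
lemma chebU_add_two (n : ℕ) (x : ℝ) :
    chebU (n+2) x = 2 * x * chebU (n+1) x - chebU n x := rfl

lemma chebT_eq (m : ℕ) (x : ℝ) :
    chebT (m+2) x = x * chebU (m+1) x - chebU m x := by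
  induction m using Nat.strong_induction_on with
  | _ m ih =>
    match m with
    | 0 => show chebT 2 x = x * chebU 1 x - chebU 0 x
           rw [chebT_add_two]; show 2*x*x - 1 = x*(2*x) - 1; ring
    | 1 => show chebT 3 x = x * chebU 2 x - chebU 1 x
           rw [chebT_add_two, chebT_add_two, chebU_add_two]
           show 2*x*(2*x*x-1) - x = x*(2*x*(2*x)-1) - 2*x; ring
    | (k+2) =>
      have h1 := ih (k+1) (by omega)
      have h0 := ih k (by omega)
      rw [chebT_add_two (k+2), h1, h0]
      rw [show k+2+1 = k+1+2 from by omega, show k+1+1 = k+2 from by omega] 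
      rw [chebU_add_two (k+1)]
      linear_combination chebU_add_two k x

noncomputable def chebD : ℕ → ℝ → ℝ
  | 0, _ => 0
  | (k+1), x => ((k:ℝ)+1) * chebU k x

lemma chebD_succ (k : ℕ) (x : ℝ) : chebD (k+1) x = ((k:ℝ)+1) * chebU k x := rfl

lemma hasDerivAt_chebT (n : ℕ) (x : ℝ) :
    HasDerivAt (fun y => chebT n y) (chebD n x) x := by
  induction n using Nat.strong_induction_on with
  | _ n ih =>
    match n with
    | 0 => exact hasDerivAt_const x 1
    | 1 =>
      have h : HasDerivAt (fun y : ℝ => y) 1 x := hasDerivAt_id x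
      have : chebD 1 x = 1 := by rw [chebD_succ]; norm_num [chebU]
      rw [this]; exact h
    | (k+2) =>
      have h1 := ih (k+1) (by omega)
      have h0 := ih k (by omega)
      have hm : HasDerivAt (fun y : ℝ => 2*y) 2 x := by
        simpa using (hasDerivAt_id x).const_mul (2:ℝ)
      have H := (hm.mul h1).sub h0
      have hval : 2 * chebT (k+1) x + 2*x * chebD (k+1) x - chebD k x
          = chebD (k+2) x := by
        match k with
        | 0 => simp [chebT, chebU, chebD]; ring
        | (j+1) =>
          rw [chebD_succ, chebD_succ, chebD_succ, chebT_eq j x, chebU_add_two j x]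
          push_cast
          ring
      have Hf : HasDerivAt (fun y => chebT (k+2) y) (2 * chebT (k+1) x + 2*x * chebD (k+1) x - chebD k x) x := by
        refine H.congr_of_eventuallyEq (Filter.Eventually.of_forall fun y => ?_)
        simp only [chebT_add_two, Pi.mul_apply, Pi.sub_apply]
      rwa [hval] at Hf

lemma chebU_chain {x : ℝ} (hx : 1 < x) :
    ∀ n, 0 < chebU n x ∧ chebU n x < chebU (n+1) x := by
  intro n
  induction n with
  | zero => constructor
            · norm_num [chebU]
            · show (1:ℝ) < 2*x; linarith
  | succ k ihk =>
    obtain ⟨h0, h01⟩ := ihk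
    refine ⟨by linarith, ?_⟩
    rw [chebU_add_two]
    nlinarith

lemma chebT_chain {x : ℝ} (hx : 1 < x) :
    ∀ n, 1 ≤ chebT n x ∧ chebT n x < chebT (n+1) x := by
  intro n
  induction n with
  | zero => exact ⟨le_refl _, by show (1:ℝ) < x; linarith⟩
  | succ k ihk =>
    obtain ⟨h0, h01⟩ := ihk
    refine ⟨by linarith, ?_⟩
    rw [chebT_add_two]
    nlinarith

theorem stmt9 (s : ℕ) (hs : 3 ≤ s) (w0 : ℝ) (hw0 : 1 < w0) :
    let b : ℝ := 1 / (1 + chebT (s-1) w0)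
    let w1 : ℝ := (1 + chebT (s-1) w0) / deriv (chebT (s-1)) w0
    let γ : ℝ := b / (2 * s * w1)
    let δ : ℝ := -b / (2 * (s-2) * w1)
    let R : ℝ → ℝ := fun x => 1 + b * x
      + γ * (chebT s (w0 + w1 * x) - chebT s w0)
      + δ * (chebT (s-2) (w0 + w1 * x) - chebT (s-2) w0)
    R 0 = 1 ∧ deriv R 0 = 1 ∧ deriv (deriv R) 0 = 1 := by
  obtain ⟨m, rfl⟩ : ∃ m, s = m + 3 := ⟨s - 3, by omega⟩
  intro b w1 γ δ R
  have e1 : m + 3 - 1 = m + 2 := by omega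
  have e2 : m + 3 - 2 = m + 1 := by omega
  have hb : b = 1/(1 + chebT (m+3-1) w0) := rfl
  have hw1d : w1 = (1 + chebT (m+3-1) w0) / deriv (chebT (m+3-1)) w0 := rfl
  have hγ : γ = b / (2 * ((m+3:ℕ):ℝ) * w1) := rfl
  have hδ : δ = -b / (2 * (((m+3:ℕ):ℝ) - 2) * w1) := rfl
  have hRdef : R = fun x => 1 + b * x
      + γ * (chebT (m+3) (w0 + w1 * x) - chebT (m+3) w0)
      + δ * (chebT (m+3-2) (w0 + w1 * x) - chebT (m+3-2) w0) := rfl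
  clear_value b w1 γ δ R
  rw [e1] at hb hw1d
  rw [e2] at hRdef
  have hγ' : γ = b / (2 * ((m:ℝ)+3) * w1) := by rw [hγ]; push_cast; ring_nf
  have hδ' : δ = -b / (2 * ((m:ℝ)+1) * w1) := by rw [hδ]; push_cast; ring_nf
  have hcpos : (0:ℝ) < 1 + chebT (m+2) w0 := by
    have := (chebT_chain hw0 (m+2)).1; linarith
  have hDeq : deriv (chebT (m+2)) w0 = chebD (m+2) w0 := (hasDerivAt_chebT (m+2) w0).deriv
  have hUpos := (chebU_chain hw0 (m+1)).1
  have hDpos : 0 < chebD (m+2) w0 := by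
    rw [chebD_succ (m+1) w0]
    have hp : (0:ℝ) < ((m+1:ℕ):ℝ) + 1 := by positivity
    exact mul_pos hp hUpos
  rw [hDeq] at hw1d
  have hw1pos : 0 < w1 := by rw [hw1d]; positivity
  have hw1ne : w1 ≠ 0 := ne_of_gt hw1pos
  have hm3 : ((m:ℝ)+3) ≠ 0 := by positivity
  have hm1 : ((m:ℝ)+1) ≠ 0 := by positivity
  have key : ∀ u : ℝ, γ * (chebD (m+3) u * w1) + δ * (chebD (m+1) u * w1)
      = b * chebT (m+2) u := by
    intro u
    have hU2 : chebU (m+2) u - chebU m u = 2 * chebT (m+2) u := by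
      linear_combination chebU_add_two m u - 2 * chebT_eq m u
    have A : γ * (chebD (m+3) u * w1) = b/2 * chebU (m+2) u := by
      rw [hγ', chebD_succ (m+2) u]; push_cast; field_simp; ring
    have B : δ * (chebD (m+1) u * w1) = -(b/2) * chebU m u := by
      rw [hδ', chebD_succ m u]; field_simp
    rw [A, B]
    linear_combination (b/2) * hU2
  have hRderiv : ∀ x : ℝ, HasDerivAt R (b * (1 + chebT (m+2) (w0 + w1 * x))) x := by
    intro x
    have hinner : HasDerivAt (fun y : ℝ => w0 + w1 * y) w1 x := by
      simpa using ((hasDerivAt_id x).const_mul w1).const_add w0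
    have h3 : HasDerivAt (fun y : ℝ => chebT (m+3) (w0 + w1*y))
        (chebD (m+3) (w0+w1*x) * w1) x := by
      have := (hasDerivAt_chebT (m+3) (w0+w1*x)).comp x hinner; exact this
    have h1 : HasDerivAt (fun y : ℝ => chebT (m+1) (w0 + w1*y))
        (chebD (m+1) (w0+w1*x) * w1) x :=
      (hasDerivAt_chebT (m+1) (w0+w1*x)).comp x hinner
    have H := (((hasDerivAt_const x (1:ℝ)).add ((hasDerivAt_id x).const_mul b)).add
        ((h3.sub_const (chebT (m+3) w0)).const_mul γ)).add
        ((h1.sub_const (chebT (m+1) w0)).const_mul δ)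
    rw [hRdef]
    refine H.congr_deriv ?_
    linear_combination key (w0 + w1 * x)
  have hR' : deriv R = fun x => b * (1 + chebT (m+2) (w0 + w1 * x)) :=
    funext fun x => (hRderiv x).deriv
  refine ⟨?_, ?_, ?_⟩
  · rw [hRdef]; norm_num
  · rw [hR']
    show b * (1 + chebT (m+2) (w0 + w1 * 0)) = 1
    rw [mul_zero, add_zero, hb]
    field_simp
  · rw [hR']
    have hinner : HasDerivAt (fun y : ℝ => w0 + w1 * y) w1 0 := by
      simpa using ((hasDerivAt_id (0:ℝ)).const_mul w1).const_add w0
    have h2 : HasDerivAt (fun x : ℝ => b * (1 + chebT (m+2) (w0 + w1 * x)))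
        (b * (chebD (m+2) (w0 + w1 * 0) * w1)) 0 := by
      have := (((hasDerivAt_chebT (m+2) (w0 + w1*0)).comp 0 hinner).const_add 1).const_mul b; exact this
    rw [h2.deriv, mul_zero, add_zero, hb, hw1d]
    field_simp
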